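/- Suppose the system ẋ = A(t)x is uniformly asymptotically stable and let x be any solution. Then for all t ≥ t₀: ‖x(t₀)‖_{H(t₀)} · exp(−(1/2)·∫_{t₀}^t dτ/λ_min[H(τ)]) ≤ ‖x(t)‖_{H(t)} ≤ ‖x(t₀)‖_{H(t₀)} · exp(−(1/2)·∫_{t₀}^t dτ/λ_max[H(τ)]), where H(t) = ∫_t^∞ Φ(τ,t)ᵀ·Φ(τ,t) dτ. -/

import Mathlib

open scoped Matrix
open scoped Matrix.Norms.L2Operator  -- `‖·‖` on matrices is the operator norm induced by the Euclidean norm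
open Set MeasureTheory

/-- The weighted vector norm `‖x‖_H = (xᵀ H x)^{1/2}` for a weight matrix `H`. -/
noncomputable def wNorm {n : ℕ} (H : Matrix (Fin n) (Fin n) ℝ) (x : Fin n → ℝ) : ℝ :=
  Real.sqrt (x ⬝ᵥ (H *ᵥ x))

/-- The largest (real) eigenvalue of a matrix, as the supremum of its real spectrum.
For a real symmetric matrix this is `λ_max`. -/
noncomputable def lambdaMax {n : ℕ} (M : Matrix (Fin n) (Fin n) ℝ) : ℝ :=
  sSup (spectrum ℝ M)

/-- The smallest (real) eigenvalue of a matrix, as the infimum of its real spectrum.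
For a real symmetric matrix this is `λ_min`. -/
noncomputable def lambdaMin {n : ℕ} (M : Matrix (Fin n) (Fin n) ℝ) : ℝ :=
  sInf (spectrum ℝ M)

/-- `H(t) = ∫_t^∞ Φ(τ,t)ᵀ Φ(τ,t) dτ`. -/
noncomputable def Hmat {n : ℕ} (Φ : ℝ → ℝ → Matrix (Fin n) (Fin n) ℝ) (t : ℝ) :
    Matrix (Fin n) (Fin n) ℝ :=
  ∫ τ in Ioi t, (Φ τ t)ᵀ * Φ τ t

set_option linter.unusedSectionVars false
set_option maxHeartbeats 1000000

open Topology Filter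

namespace Stmt10Aux


variable {n : ℕ}

/-- `M ↦ (M *ᵥ ·)` as a linear map into continuous linear maps. -/
noncomputable def mulVecL (n : ℕ) : Matrix (Fin n) (Fin n) ℝ →ₗ[ℝ] ((Fin n → ℝ) →L[ℝ] (Fin n → ℝ)) where
  toFun M := LinearMap.toContinuousLinearMap M.mulVecLin
  map_add' M N := by ext v; simp [Matrix.add_mulVec]
  map_smul' r M := by ext v; simp [Matrix.smul_mulVec]

lemma continuous_mulVecL : Continuous (mulVecL n) :=
  (mulVecL n).continuous_of_finiteDimensional

lemma mulVecL_apply (M : Matrix (Fin n) (Fin n) ℝ) (v : Fin n → ℝ) :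
    mulVecL n M v = M *ᵥ v := rfl

lemma continuousOn_of_hasDeriv {t₀ : ℝ} {y : ℝ → Fin n → ℝ} {f : ℝ → Fin n → ℝ}
    (hy : ∀ t ∈ Ici t₀, HasDerivWithinAt y (f t) (Ici t₀) t) :
    ContinuousOn y (Ici t₀) := fun t ht => (hy t ht).continuousWithinAt

lemma uniq_right {t₀ : ℝ} {A : ℝ → Matrix (Fin n) (Fin n) ℝ} (hA : ContinuousOn A (Ici t₀))
    {a b : ℝ} (ha : t₀ ≤ a)
    {y z : ℝ → Fin n → ℝ}
    (hy : ∀ t ∈ Ici t₀, HasDerivWithinAt y (A t *ᵥ y t) (Ici t₀) t)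
    (hz : ∀ t ∈ Ici t₀, HasDerivWithinAt z (A t *ᵥ z t) (Ici t₀) t)
    (hab : y a = z a) : EqOn y z (Icc a b) := by
  rcases le_or_gt a b with hle | hlt
  swap
  · rw [Icc_eq_empty (not_le.mpr hlt)]; exact fun t ht => absurd ht (notMem_empty t)
  have hsub : Icc a b ⊆ Ici t₀ := fun t ht => le_trans ha ht.1
  obtain ⟨C, hC⟩ := (isCompact_Icc (a := a) (b := b)).exists_bound_of_continuousOn
    (continuous_mulVecL.comp_continuousOn (hA.mono hsub))
  set K : NNReal := ⟨max C 0, le_max_right _ _⟩ with hK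
  set v : ℝ → (Fin n → ℝ) → (Fin n → ℝ) :=
    fun t => if t ∈ Icc a b then (fun w => A t *ᵥ w) else 0 with hv_def
  have hv : ∀ t, LipschitzOnWith K (v t) univ := by
    intro t
    by_cases ht : t ∈ Icc a b
    · have h1 : LipschitzWith ‖mulVecL n (A t)‖₊ (mulVecL n (A t)) :=
        (mulVecL n (A t)).lipschitz
      have h2 : ‖mulVecL n (A t)‖₊ ≤ K := by
        rw [← NNReal.coe_le_coe]
        exact le_trans (hC t ht) (le_max_left _ _)
      have := h1.weaken h2
      simp only [hv_def, if_pos ht]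
      exact LipschitzWith.lipschitzOnWith this
    · simp only [hv_def, if_neg ht]
      exact (LipschitzWith.const' (0 : Fin n → ℝ)).weaken (zero_le : (0:NNReal) ≤ K) |>.lipschitzOnWith
  have key := ODE_solution_unique_of_mem_Icc_right (v := v) (s := fun _ => univ) (fun t _ => hv t)
    (f := y) (g := z) (a := a) (b := b)
    (((continuousOn_of_hasDeriv hy : ContinuousOn y (Ici t₀))).mono hsub)
    (fun t ht => by
      have h1 : t ∈ Icc a b := Ico_subset_Icc_self ht
      simp only [hv_def, if_pos h1]
      exact (hy t (hsub h1)).mono (Ici_subset_Ici.mpr (hsub h1)))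
    (fun t _ => mem_univ _)
    (((continuousOn_of_hasDeriv hz : ContinuousOn z (Ici t₀))).mono hsub)
    (fun t ht => by
      have h1 : t ∈ Icc a b := Ico_subset_Icc_self ht
      simp only [hv_def, if_pos h1]
      exact (hz t (hsub h1)).mono (Ici_subset_Ici.mpr (hsub h1)))
    (fun t _ => mem_univ _) hab
  exact key

lemma uniq_left {t₀ : ℝ} {A : ℝ → Matrix (Fin n) (Fin n) ℝ} (hA : ContinuousOn A (Ici t₀))
    {a b : ℝ} (ha : t₀ ≤ a)
    {y z : ℝ → Fin n → ℝ}
    (hy : ∀ t ∈ Ici t₀, HasDerivWithinAt y (A t *ᵥ y t) (Ici t₀) t)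
    (hz : ∀ t ∈ Ici t₀, HasDerivWithinAt z (A t *ᵥ z t) (Ici t₀) t)
    (hab : y b = z b) : EqOn y z (Icc a b) := by
  rcases le_or_gt a b with hle | hlt
  swap
  · rw [Icc_eq_empty (not_le.mpr hlt)]; exact fun t ht => absurd ht (notMem_empty t)
  have hsub : Icc a b ⊆ Ici t₀ := fun t ht => le_trans ha ht.1
  obtain ⟨C, hC⟩ := (isCompact_Icc (a := a) (b := b)).exists_bound_of_continuousOn
    (continuous_mulVecL.comp_continuousOn (hA.mono hsub))
  set K : NNReal := ⟨max C 0, le_max_right _ _⟩ with hK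
  set v : ℝ → (Fin n → ℝ) → (Fin n → ℝ) :=
    fun t => if t ∈ Icc a b then (fun w => A t *ᵥ w) else 0 with hv_def
  have hv : ∀ t, LipschitzOnWith K (v t) univ := by
    intro t
    by_cases ht : t ∈ Icc a b
    · have h1 : LipschitzWith ‖mulVecL n (A t)‖₊ (mulVecL n (A t)) :=
        (mulVecL n (A t)).lipschitz
      have h2 : ‖mulVecL n (A t)‖₊ ≤ K := by
        rw [← NNReal.coe_le_coe]
        exact le_trans (hC t ht) (le_max_left _ _)
      have := h1.weaken h2
      simp only [hv_def, if_pos ht]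
      exact LipschitzWith.lipschitzOnWith this
    · simp only [hv_def, if_neg ht]
      exact (LipschitzWith.const' (0 : Fin n → ℝ)).weaken (zero_le : (0:NNReal) ≤ K) |>.lipschitzOnWith
  have hderiv : ∀ (w : ℝ → Fin n → ℝ),
      (∀ t ∈ Ici t₀, HasDerivWithinAt w (A t *ᵥ w t) (Ici t₀) t) →
      ∀ t ∈ Ioc a b, HasDerivWithinAt w (v t (w t)) (Iic t) t := by
    intro w hw t ht
    have h1 : t ∈ Icc a b := Ioc_subset_Icc_self ht
    have ht0 : t₀ < t := lt_of_le_of_lt ha ht.1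
    simp only [hv_def, if_pos h1]
    exact (hw t (hsub h1)).mono_of_mem_nhdsWithin (mem_nhdsWithin_of_mem_nhds (Ici_mem_nhds ht0))
  exact ODE_solution_unique_of_mem_Icc_left (v := v) (s := fun _ => univ) (fun t _ => hv t)
    (((continuousOn_of_hasDeriv hy : ContinuousOn y (Ici t₀))).mono hsub) (hderiv y hy) (fun t _ => mem_univ _)
    (((continuousOn_of_hasDeriv hz : ContinuousOn z (Ici t₀))).mono hsub) (hderiv z hz) (fun t _ => mem_univ _) hab


/-- `M ↦ M *ᵥ c` as a continuous linear map. -/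
noncomputable def appCLM (c : Fin n → ℝ) : Matrix (Fin n) (Fin n) ℝ →L[ℝ] (Fin n → ℝ) :=
  LinearMap.toContinuousLinearMap
    { toFun := fun M => M *ᵥ c
      map_add' := fun M N => Matrix.add_mulVec M N c
      map_smul' := fun r M => by simp [Matrix.smul_mulVec] }

lemma appCLM_apply (c : Fin n → ℝ) (M : Matrix (Fin n) (Fin n) ℝ) : appCLM c M = M *ᵥ c := rfl

section Main

variable {t₀ : ℝ} {A : ℝ → Matrix (Fin n) (Fin n) ℝ} {Φ : ℝ → ℝ → Matrix (Fin n) (Fin n) ℝ}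

lemma sol_mulVec (hΦ_deriv : ∀ τ ∈ Ici t₀, ∀ t ∈ Ici t₀,
      HasDerivWithinAt (fun s => Φ s τ) (A t * Φ t τ) (Ici t₀) t)
    {τ : ℝ} (hτ : τ ∈ Ici t₀) (c : Fin n → ℝ) :
    ∀ t ∈ Ici t₀, HasDerivWithinAt (fun s => Φ s τ *ᵥ c)
      (A t *ᵥ (Φ t τ *ᵥ c)) (Ici t₀) t := by
  intro t ht
  have h := (appCLM c).hasFDerivAt.comp_hasDerivWithinAt t (hΦ_deriv τ hτ t ht)
  rw [Matrix.mulVec_mulVec]; exact h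

lemma rep (hA : ContinuousOn A (Ici t₀))
    (hΦ_id : ∀ τ ∈ Ici t₀, Φ τ τ = 1)
    (hΦ_deriv : ∀ τ ∈ Ici t₀, ∀ t ∈ Ici t₀,
      HasDerivWithinAt (fun s => Φ s τ) (A t * Φ t τ) (Ici t₀) t)
    {x : ℝ → Fin n → ℝ}
    (hx : ∀ t ∈ Ici t₀, HasDerivWithinAt x (A t *ᵥ x t) (Ici t₀) t)
    {τ : ℝ} (hτ : τ ∈ Ici t₀) {s : ℝ} (hs : τ ≤ s) :
    x s = Φ s τ *ᵥ x τ := by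
  have h := uniq_right (b := s) hA hτ hx (sol_mulVec hΦ_deriv hτ (x τ))
    (by simp [hΦ_id τ hτ, Matrix.one_mulVec])
  exact h ⟨hs, le_refl s⟩

lemma isUnit_P (hA : ContinuousOn A (Ici t₀))
    (hΦ_id : ∀ τ ∈ Ici t₀, Φ τ τ = 1)
    (hΦ_deriv : ∀ τ ∈ Ici t₀, ∀ t ∈ Ici t₀,
      HasDerivWithinAt (fun s => Φ s τ) (A t * Φ t τ) (Ici t₀) t)
    {τ : ℝ} (hτ : τ ∈ Ici t₀) : IsUnit (Φ τ t₀) := by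
  rw [← Matrix.mulVec_injective_iff_isUnit]
  intro v w hvw
  have ht0 : (t₀ : ℝ) ∈ Ici t₀ := le_refl t₀
  have h := uniq_left (a := t₀) (b := τ) hA (le_refl t₀) (sol_mulVec hΦ_deriv ht0 v)
    (sol_mulVec hΦ_deriv ht0 w) hvw
  have h2 := h ⟨le_refl t₀, hτ⟩
  simpa [hΦ_id t₀ ht0, Matrix.one_mulVec] using h2

lemma cocycle (hA : ContinuousOn A (Ici t₀))
    (hΦ_id : ∀ τ ∈ Ici t₀, Φ τ τ = 1)
    (hΦ_deriv : ∀ τ ∈ Ici t₀, ∀ t ∈ Ici t₀,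
      HasDerivWithinAt (fun s => Φ s τ) (A t * Φ t τ) (Ici t₀) t)
    {τ : ℝ} (hτ : τ ∈ Ici t₀) {s : ℝ} (hs : τ ≤ s) :
    Φ s τ * Φ τ t₀ = Φ s t₀ := by
  have hsmem : s ∈ Ici t₀ := le_trans hτ hs
  have key : ∀ v : Fin n → ℝ, (Φ s τ * Φ τ t₀) *ᵥ v = Φ s t₀ *ᵥ v := by
    intro v
    have h := uniq_right (b := s) hA hτ
      (sol_mulVec hΦ_deriv hτ (Φ τ t₀ *ᵥ v)) (sol_mulVec hΦ_deriv (le_refl t₀ : t₀ ∈ Ici t₀) v)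
      (by simp [hΦ_id τ hτ, Matrix.one_mulVec])
    have h2 := h ⟨hs, le_refl s⟩
    rw [← Matrix.mulVec_mulVec]
    exact h2
  ext i j
  have := congrFun (key (Pi.single j 1)) i
  simpa [Matrix.mulVec_single] using this

lemma phi_eq (hA : ContinuousOn A (Ici t₀))
    (hΦ_id : ∀ τ ∈ Ici t₀, Φ τ τ = 1)
    (hΦ_deriv : ∀ τ ∈ Ici t₀, ∀ t ∈ Ici t₀,
      HasDerivWithinAt (fun s => Φ s τ) (A t * Φ t τ) (Ici t₀) t)
    {τ : ℝ} (hτ : τ ∈ Ici t₀) {s : ℝ} (hs : τ ≤ s) :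
    Φ s τ = Φ s t₀ * (Φ τ t₀)⁻¹ := by
  have hu : IsUnit (Φ τ t₀).det :=
    Matrix.isUnit_iff_isUnit_det _ |>.mp (isUnit_P hA hΦ_id hΦ_deriv hτ)
  calc Φ s τ = Φ s τ * (Φ τ t₀ * (Φ τ t₀)⁻¹) := by rw [Matrix.mul_nonsing_inv _ hu, mul_one]
  _ = (Φ s τ * Φ τ t₀) * (Φ τ t₀)⁻¹ := by rw [mul_assoc]
  _ = Φ s t₀ * (Φ τ t₀)⁻¹ := by rw [cocycle hA hΦ_id hΦ_deriv hτ hs]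

end Main



variable {n : ℕ}

lemma dotProduct_eq_inner (a b : Fin n → ℝ) :
    a ⬝ᵥ b = inner (𝕜 := ℝ) ((EuclideanSpace.equiv (Fin n) ℝ).symm a)
      ((EuclideanSpace.equiv (Fin n) ℝ).symm b) := by
  simp [PiLp.inner_apply, dotProduct, RCLike.inner_apply, conj_trivial, mul_comm]

lemma quad_abs_le (M : Matrix (Fin n) (Fin n) ℝ) (u : Fin n → ℝ) :
    u ⬝ᵥ (M *ᵥ u) ≤ ‖M‖ * (u ⬝ᵥ u) := by
  set x' : EuclideanSpace ℝ (Fin n) := (EuclideanSpace.equiv (Fin n) ℝ).symm u with hx'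
  have h1 : u ⬝ᵥ (M *ᵥ u) = inner (𝕜 := ℝ) x' ((EuclideanSpace.equiv (Fin n) ℝ).symm (M *ᵥ u)) :=
    dotProduct_eq_inner _ _
  have h2 : u ⬝ᵥ u = ‖x'‖ * ‖x'‖ := by
    rw [dotProduct_eq_inner, real_inner_self_eq_norm_mul_norm]
  have h3 := real_inner_le_norm x' ((EuclideanSpace.equiv (Fin n) ℝ).symm (M *ᵥ u))
  have h4 := Matrix.l2_opNorm_mulVec M x'
  rw [h1, h2]
  calc inner (𝕜 := ℝ) x' ((EuclideanSpace.equiv (Fin n) ℝ).symm (M *ᵥ u))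
      ≤ ‖x'‖ * ‖(EuclideanSpace.equiv (Fin n) ℝ).symm (M *ᵥ u)‖ := h3
    _ ≤ ‖x'‖ * (‖M‖ * ‖x'‖) := by
        apply mul_le_mul_of_nonneg_left _ (norm_nonneg _)
        exact h4
    _ = ‖M‖ * (‖x'‖ * ‖x'‖) := by ring

lemma vecMul_eq_transpose_mulVec (U : Matrix (Fin n) (Fin n) ℝ) (v : Fin n → ℝ) :
    v ᵥ* U = Uᵀ *ᵥ v := by
  rw [← Matrix.transpose_transpose U, Matrix.vecMul_transpose, Matrix.transpose_transpose]

lemma star_coe_eq (U : Matrix (Fin n) (Fin n) ℝ) : star U = Uᵀ := by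
  rw [Matrix.star_eq_conjTranspose, Matrix.conjTranspose_eq_transpose_of_trivial]

lemma quad_spectral {H : Matrix (Fin n) (Fin n) ℝ} (hH : H.IsHermitian) (v : Fin n → ℝ) :
    v ⬝ᵥ (H *ᵥ v) = ∑ i, hH.eigenvalues i *
      ((((Matrix.IsHermitian.eigenvectorUnitary hH : Matrix.unitaryGroup (Fin n) ℝ) : Matrix (Fin n) (Fin n) ℝ)ᵀ *ᵥ v) i)^2 := by
  set U : Matrix (Fin n) (Fin n) ℝ := ((Matrix.IsHermitian.eigenvectorUnitary hH : Matrix.unitaryGroup (Fin n) ℝ) : Matrix (Fin n) (Fin n) ℝ) with hU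
  set w : Fin n → ℝ := Uᵀ *ᵥ v with hw
  conv_lhs => rw [hH.spectral_theorem]
  have hd : Matrix.diagonal (RCLike.ofReal ∘ hH.eigenvalues) =
      Matrix.diagonal hH.eigenvalues := by
    congr 1
  rw [Unitary.conjStarAlgAut_apply, hd, star_coe_eq, ← Matrix.mulVec_mulVec, ← Matrix.mulVec_mulVec,
    Matrix.dotProduct_mulVec, vecMul_eq_transpose_mulVec]
  simp only [← hw, dotProduct, Matrix.mulVec_diagonal]
  exact Finset.sum_congr rfl fun i _ => by ring

lemma dot_spectral {H : Matrix (Fin n) (Fin n) ℝ} (hH : H.IsHermitian) (v : Fin n → ℝ) :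
    v ⬝ᵥ v = ∑ i,
      ((((Matrix.IsHermitian.eigenvectorUnitary hH : Matrix.unitaryGroup (Fin n) ℝ) : Matrix (Fin n) (Fin n) ℝ)ᵀ *ᵥ v) i)^2 := by
  set U : Matrix (Fin n) (Fin n) ℝ := ((Matrix.IsHermitian.eigenvectorUnitary hH : Matrix.unitaryGroup (Fin n) ℝ) : Matrix (Fin n) (Fin n) ℝ) with hU
  set w : Fin n → ℝ := Uᵀ *ᵥ v with hw
  have hUU : U * Uᵀ = 1 := by
    rw [← star_coe_eq]
    exact (Matrix.mem_unitaryGroup_iff).mp (Matrix.IsHermitian.eigenvectorUnitary hH).2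
  have h1 : w ⬝ᵥ w = v ⬝ᵥ v := by
    rw [hw, Matrix.dotProduct_mulVec, vecMul_eq_transpose_mulVec, Matrix.transpose_transpose,
      Matrix.mulVec_mulVec, hUU, Matrix.one_mulVec]
  rw [← h1]
  simp only [dotProduct]
  exact Finset.sum_congr rfl fun i _ => by ring


variable [Nonempty (Fin n)]

lemma eig_le_lambdaMax {H : Matrix (Fin n) (Fin n) ℝ} (hH : H.IsHermitian) (i : Fin n) :
    hH.eigenvalues i ≤ lambdaMax H := by
  rw [lambdaMax, Matrix.IsHermitian.spectrum_real_eq_range_eigenvalues hH]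
  exact le_csSup (Set.finite_range _).bddAbove ⟨i, rfl⟩

lemma lambdaMin_le_eig {H : Matrix (Fin n) (Fin n) ℝ} (hH : H.IsHermitian) (i : Fin n) :
    lambdaMin H ≤ hH.eigenvalues i := by
  rw [lambdaMin, Matrix.IsHermitian.spectrum_real_eq_range_eigenvalues hH]
  exact csInf_le (Set.finite_range _).bddBelow ⟨i, rfl⟩

lemma quad_le_lambdaMax {H : Matrix (Fin n) (Fin n) ℝ} (hH : H.IsHermitian) (v : Fin n → ℝ) :
    v ⬝ᵥ (H *ᵥ v) ≤ lambdaMax H * (v ⬝ᵥ v) := by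
  rw [quad_spectral hH v, dot_spectral hH v, Finset.mul_sum]
  exact Finset.sum_le_sum fun i _ =>
    mul_le_mul_of_nonneg_right (eig_le_lambdaMax hH i) (sq_nonneg _)

lemma lambdaMin_le_quad {H : Matrix (Fin n) (Fin n) ℝ} (hH : H.IsHermitian) (v : Fin n → ℝ) :
    lambdaMin H * (v ⬝ᵥ v) ≤ v ⬝ᵥ (H *ᵥ v) := by
  rw [quad_spectral hH v, dot_spectral hH v, Finset.mul_sum]
  exact Finset.sum_le_sum fun i _ =>
    mul_le_mul_of_nonneg_right (lambdaMin_le_eig hH i) (sq_nonneg _)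

lemma lambdaMin_pos {H : Matrix (Fin n) (Fin n) ℝ} (hH : H.PosDef) : 0 < lambdaMin H := by
  have h1 : lambdaMin H ∈ Set.range hH.1.eigenvalues := by
    rw [lambdaMin, Matrix.IsHermitian.spectrum_real_eq_range_eigenvalues hH.1]
    exact (Set.range_nonempty _).csInf_mem (Set.finite_range _)
  obtain ⟨i, hi⟩ := h1
  rw [← hi]
  exact hH.eigenvalues_pos i

lemma lambdaMax_pos {H : Matrix (Fin n) (Fin n) ℝ} (hH : H.PosDef) : 0 < lambdaMax H := by
  have i : Fin n := Classical.arbitrary _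
  exact lt_of_lt_of_le (hH.eigenvalues_pos i) (eig_le_lambdaMax hH.1 i)

lemma eig_eq_quad {H : Matrix (Fin n) (Fin n) ℝ} (hH : H.IsHermitian) (i : Fin n) :
    hH.eigenvalues i = (⇑(hH.eigenvectorBasis i) : Fin n → ℝ) ⬝ᵥ
      (H *ᵥ (⇑(hH.eigenvectorBasis i) : Fin n → ℝ)) := by
  have h := Matrix.IsHermitian.eigenvalues_eq hH i
  simpa using h

lemma eigvec_unit {H : Matrix (Fin n) (Fin n) ℝ} (hH : H.IsHermitian) (i : Fin n) :
    (⇑(hH.eigenvectorBasis i) : Fin n → ℝ) ⬝ᵥ (⇑(hH.eigenvectorBasis i) : Fin n → ℝ) = 1 := by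
  have h2 : inner (𝕜 := ℝ) (hH.eigenvectorBasis i) (hH.eigenvectorBasis i) = (1 : ℝ) := by
    rw [real_inner_self_eq_norm_mul_norm, hH.eigenvectorBasis.orthonormal.1 i, one_mul]
  rw [← h2, EuclideanSpace.inner_eq_star_dotProduct]
  simp

lemma lambdaMax_sub_le {H K : Matrix (Fin n) (Fin n) ℝ} (hH : H.IsHermitian)
    (hK : K.IsHermitian) : lambdaMax H ≤ lambdaMax K + ‖H - K‖ := by
  rw [lambdaMax, Matrix.IsHermitian.spectrum_real_eq_range_eigenvalues hH]
  apply csSup_le (Set.range_nonempty _)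
  rintro a ⟨i, rfl⟩
  set u : Fin n → ℝ := (⇑(hH.eigenvectorBasis i) : Fin n → ℝ) with hu
  have h1 : hH.eigenvalues i = u ⬝ᵥ (K *ᵥ u) + u ⬝ᵥ ((H - K) *ᵥ u) := by
    rw [eig_eq_quad hH i, ← hu]
    rw [Matrix.sub_mulVec, dotProduct_sub]
    ring
  rw [h1]
  have h2 : u ⬝ᵥ (K *ᵥ u) ≤ lambdaMax K := by
    have := quad_le_lambdaMax hK u
    rwa [eigvec_unit hH i, mul_one] at this
  have h3 : u ⬝ᵥ ((H - K) *ᵥ u) ≤ ‖H - K‖ := by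
    have := quad_abs_le (H - K) u
    rwa [eigvec_unit hH i, mul_one] at this
  linarith

lemma lambdaMin_sub_ge {H K : Matrix (Fin n) (Fin n) ℝ} (hH : H.IsHermitian)
    (hK : K.IsHermitian) : lambdaMin K - ‖H - K‖ ≤ lambdaMin H := by
  have h0 : lambdaMin H = sInf (Set.range hH.eigenvalues) := by
    rw [lambdaMin, Matrix.IsHermitian.spectrum_real_eq_range_eigenvalues hH]
  rw [h0]
  apply le_csInf (Set.range_nonempty _)
  rintro a ⟨i, rfl⟩
  set u : Fin n → ℝ := (⇑(hH.eigenvectorBasis i) : Fin n → ℝ) with hu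
  have h1 : hH.eigenvalues i = u ⬝ᵥ (K *ᵥ u) + u ⬝ᵥ ((H - K) *ᵥ u) := by
    rw [eig_eq_quad hH i, ← hu]
    rw [Matrix.sub_mulVec, dotProduct_sub]
    ring
  rw [h1]
  have h2 : lambdaMin K ≤ u ⬝ᵥ (K *ᵥ u) := by
    have := lambdaMin_le_quad hK u
    rwa [eigvec_unit hH i, mul_one] at this
  have h3 : -‖H - K‖ ≤ u ⬝ᵥ ((H - K) *ᵥ u) := by
    have h4 := quad_abs_le (K - H) u
    rw [eigvec_unit hH i, mul_one] at h4
    have h5 : u ⬝ᵥ ((K - H) *ᵥ u) = - (u ⬝ᵥ ((H - K) *ᵥ u)) := by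
      rw [Matrix.sub_mulVec, Matrix.sub_mulVec, dotProduct_sub, dotProduct_sub]
      ring
    rw [norm_sub_rev]
    linarith [h4, h5.symm ▸ h4]
  linarith

lemma abs_lambdaMax_sub {H K : Matrix (Fin n) (Fin n) ℝ} (hH : H.IsHermitian)
    (hK : K.IsHermitian) : |lambdaMax H - lambdaMax K| ≤ ‖H - K‖ := by
  rw [abs_le]
  constructor
  · have := lambdaMax_sub_le hK hH
    rw [norm_sub_rev] at this
    linarith
  · linarith [lambdaMax_sub_le hH hK]

lemma abs_lambdaMin_sub {H K : Matrix (Fin n) (Fin n) ℝ} (hH : H.IsHermitian)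
    (hK : K.IsHermitian) : |lambdaMin H - lambdaMin K| ≤ ‖H - K‖ := by
  rw [abs_le]
  constructor
  · have := lambdaMin_sub_ge hH hK
    linarith
  · have := lambdaMin_sub_ge hK hH
    rw [norm_sub_rev] at this
    linarith


section HProps

variable {t₀ γ lam : ℝ} {A : ℝ → Matrix (Fin n) (Fin n) ℝ}
  {Φ : ℝ → ℝ → Matrix (Fin n) (Fin n) ℝ}

noncomputable def trCLM (n : ℕ) : Matrix (Fin n) (Fin n) ℝ →L[ℝ] Matrix (Fin n) (Fin n) ℝ :=
  LinearMap.toContinuousLinearMap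
    { toFun := Matrix.transpose
      map_add' := fun M N => Matrix.transpose_add M N
      map_smul' := fun r M => Matrix.transpose_smul r M }

lemma trCLM_apply (M : Matrix (Fin n) (Fin n) ℝ) : trCLM n M = Mᵀ := rfl

noncomputable def qCLM (v : Fin n → ℝ) : Matrix (Fin n) (Fin n) ℝ →L[ℝ] ℝ :=
  LinearMap.toContinuousLinearMap
    { toFun := fun M => v ⬝ᵥ (M *ᵥ v)
      map_add' := fun M N => by simp [Matrix.add_mulVec]
      map_smul' := fun r M => by simp [Matrix.smul_mulVec] }

lemma qCLM_apply (v : Fin n → ℝ) (M : Matrix (Fin n) (Fin n) ℝ) :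
    qCLM v M = v ⬝ᵥ (M *ᵥ v) := rfl

lemma qCLM_NtN (v : Fin n → ℝ) (M : Matrix (Fin n) (Fin n) ℝ) :
    qCLM v (Mᵀ * M) = (M *ᵥ v) ⬝ᵥ (M *ᵥ v) := by
  rw [qCLM_apply, ← Matrix.mulVec_mulVec, Matrix.dotProduct_mulVec, Matrix.vecMul_transpose]

noncomputable def conjCLM (Q : Matrix (Fin n) (Fin n) ℝ) :
    Matrix (Fin n) (Fin n) ℝ →L[ℝ] Matrix (Fin n) (Fin n) ℝ :=
  LinearMap.toContinuousLinearMap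
    { toFun := fun M => Qᵀ * M * Q
      map_add' := fun M N => by simp [mul_add, add_mul]
      map_smul' := fun r M => by simp [Matrix.mul_smul, Matrix.smul_mul] }

lemma conjCLM_apply (Q M : Matrix (Fin n) (Fin n) ℝ) : conjCLM Q M = Qᵀ * M * Q := rfl

lemma Phi_contOn (hΦ_deriv : ∀ τ ∈ Ici t₀, ∀ t ∈ Ici t₀,
      HasDerivWithinAt (fun s => Φ s τ) (A t * Φ t τ) (Ici t₀) t)
    {τ : ℝ} (hτ : τ ∈ Ici t₀) : ContinuousOn (fun s => Φ s τ) (Ici t₀) :=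
  fun t ht => (hΦ_deriv τ hτ t ht).continuousWithinAt

lemma Nf_contOn (hΦ_deriv : ∀ τ ∈ Ici t₀, ∀ t ∈ Ici t₀,
      HasDerivWithinAt (fun s => Φ s τ) (A t * Φ t τ) (Ici t₀) t)
    {τ : ℝ} (hτ : τ ∈ Ici t₀) :
    ContinuousOn (fun s => (Φ s τ)ᵀ * Φ s τ) (Ici t₀) := by
  have h1 : ContinuousOn (fun s => (Φ s τ)ᵀ) (Ici t₀) :=
    (trCLM n).continuous.comp_continuousOn (Phi_contOn hΦ_deriv hτ)
  exact h1.mul (Phi_contOn hΦ_deriv hτ)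

lemma norm_NtN_le (hγ : 0 < γ)
    (hUAS : ∀ τ ∈ Ici t₀, ∀ t ∈ Ici τ, ‖Φ t τ‖ ≤ γ * Real.exp (-lam * (t - τ)))
    {τ : ℝ} (hτ : τ ∈ Ici t₀) {s : ℝ} (hs : s ∈ Ici τ) :
    ‖(Φ s τ)ᵀ * Φ s τ‖ ≤ γ^2 * Real.exp (-(2*lam)*(s-τ)) := by
  have h1 : (Φ s τ)ᵀ = (Φ s τ)ᴴ := (Matrix.conjTranspose_eq_transpose_of_trivial _).symm
  rw [h1, Matrix.l2_opNorm_conjTranspose_mul_self]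
  have h2 := hUAS τ hτ s hs
  have h3 : (0:ℝ) ≤ γ * Real.exp (-lam*(s-τ)) := by positivity
  calc ‖Φ s τ‖ * ‖Φ s τ‖
      ≤ (γ * Real.exp (-lam*(s-τ))) * (γ * Real.exp (-lam*(s-τ))) :=
        mul_le_mul h2 h2 (norm_nonneg _) h3
    _ = γ^2 * Real.exp (-(2*lam)*(s-τ)) := by
        rw [mul_mul_mul_comm, ← Real.exp_add]
        ring_nf

lemma expIntegrable (C c a : ℝ) (hc : 0 < c) :
    IntegrableOn (fun s => C * Real.exp (-c*(s-a))) (Ioi a) := by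
  have h := (exp_neg_integrableOn_Ioi a hc).const_mul (C * Real.exp (c*a))
  apply h.congr (ae_of_all _ fun s => ?_)
  show C * Real.exp (c * a) * Real.exp (-c * s) = C * Real.exp (-c * (s - a))
  rw [mul_assoc, ← Real.exp_add]
  ring_nf

lemma Nf_integrableOn (hΦ_deriv : ∀ τ ∈ Ici t₀, ∀ t ∈ Ici t₀,
      HasDerivWithinAt (fun s => Φ s τ) (A t * Φ t τ) (Ici t₀) t)
    (hγ : 0 < γ) (hlam : 0 < lam)
    (hUAS : ∀ τ ∈ Ici t₀, ∀ t ∈ Ici τ, ‖Φ t τ‖ ≤ γ * Real.exp (-lam * (t - τ)))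
    {τ : ℝ} (hτ : τ ∈ Ici t₀) {b : ℝ} (hb : τ ≤ b) :
    IntegrableOn (fun s => (Φ s τ)ᵀ * Φ s τ) (Ioi b) := by
  have hsub : Ioi b ⊆ Ici t₀ := fun s hs => le_of_lt (lt_of_le_of_lt (le_trans hτ hb) hs)
  have haesm : AEStronglyMeasurable (fun s => (Φ s τ)ᵀ * Φ s τ) (volume.restrict (Ioi b)) :=
    ((Nf_contOn hΦ_deriv hτ).mono hsub).aestronglyMeasurable measurableSet_Ioi
  apply Integrable.mono'
    ((expIntegrable (γ^2) (2*lam) τ (by positivity)).mono_set (Ioi_subset_Ioi hb)) haesm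
  refine (ae_restrict_iff' measurableSet_Ioi).mpr (ae_of_all _ fun s hs => ?_)
  have hsτ : s ∈ Ici τ := le_of_lt (lt_of_le_of_lt hb hs)
  exact norm_NtN_le hγ hUAS hτ hsτ

lemma quad_Hmat (hΦ_deriv : ∀ τ ∈ Ici t₀, ∀ t ∈ Ici t₀,
      HasDerivWithinAt (fun s => Φ s τ) (A t * Φ t τ) (Ici t₀) t)
    (hγ : 0 < γ) (hlam : 0 < lam)
    (hUAS : ∀ τ ∈ Ici t₀, ∀ t ∈ Ici τ, ‖Φ t τ‖ ≤ γ * Real.exp (-lam * (t - τ)))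
    {τ : ℝ} (hτ : τ ∈ Ici t₀) (v : Fin n → ℝ) :
    v ⬝ᵥ (Hmat Φ τ *ᵥ v) = ∫ s in Ioi τ, (Φ s τ *ᵥ v) ⬝ᵥ (Φ s τ *ᵥ v) := by
  have h0 : v ⬝ᵥ (Hmat Φ τ *ᵥ v) = qCLM v (Hmat Φ τ) := rfl
  rw [h0, Hmat, ← ContinuousLinearMap.integral_comp_comm _
    (Nf_integrableOn hΦ_deriv hγ hlam hUAS hτ (le_refl τ))]
  simp only [qCLM_NtN]

lemma Hmat_herm (hΦ_deriv : ∀ τ ∈ Ici t₀, ∀ t ∈ Ici t₀,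
      HasDerivWithinAt (fun s => Φ s τ) (A t * Φ t τ) (Ici t₀) t)
    (hγ : 0 < γ) (hlam : 0 < lam)
    (hUAS : ∀ τ ∈ Ici t₀, ∀ t ∈ Ici τ, ‖Φ t τ‖ ≤ γ * Real.exp (-lam * (t - τ)))
    {τ : ℝ} (hτ : τ ∈ Ici t₀) : (Hmat Φ τ).IsHermitian := by
  have h1 : trCLM n (Hmat Φ τ) = Hmat Φ τ := by
    rw [Hmat, ← ContinuousLinearMap.integral_comp_comm _
      (Nf_integrableOn hΦ_deriv hγ hlam hUAS hτ (le_refl τ))]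
    apply integral_congr_ae (ae_of_all _ fun s => ?_)
    rw [trCLM_apply, Matrix.transpose_mul, Matrix.transpose_transpose]
  show (Hmat Φ τ)ᴴ = Hmat Φ τ
  rw [Matrix.conjTranspose_eq_transpose_of_trivial]
  exact h1

lemma Hmat_posdef (hΦ_id : ∀ τ ∈ Ici t₀, Φ τ τ = 1)
    (hΦ_deriv : ∀ τ ∈ Ici t₀, ∀ t ∈ Ici t₀,
      HasDerivWithinAt (fun s => Φ s τ) (A t * Φ t τ) (Ici t₀) t)
    (hγ : 0 < γ) (hlam : 0 < lam)
    (hUAS : ∀ τ ∈ Ici t₀, ∀ t ∈ Ici τ, ‖Φ t τ‖ ≤ γ * Real.exp (-lam * (t - τ)))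
    {τ : ℝ} (hτ : τ ∈ Ici t₀) : (Hmat Φ τ).PosDef := by
  refine Matrix.PosDef.of_dotProduct_mulVec_pos (Hmat_herm hΦ_deriv hγ hlam hUAS hτ) fun v hv => ?_
  have hst : star v = v := by funext i; simp
  rw [hst, quad_Hmat hΦ_deriv hγ hlam hUAS hτ v]
  set f : ℝ → ℝ := fun s => (Φ s τ *ᵥ v) ⬝ᵥ (Φ s τ *ᵥ v) with hf
  have hphiv : ContinuousOn (fun s => Φ s τ *ᵥ v) (Ici t₀) :=
    (appCLM v).continuous.comp_continuousOn (Phi_contOn hΦ_deriv hτ)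
  have hdot : Continuous fun w : Fin n → ℝ => w ⬝ᵥ w := by
    apply continuous_finset_sum
    exact fun i _ => (continuous_apply i).mul (continuous_apply i)
  have hfc : ContinuousOn f (Ici t₀) := hdot.comp_continuousOn hphiv
  have hnonneg : ∀ s, 0 ≤ f s := fun s => Finset.sum_nonneg fun i _ => mul_self_nonneg _
  have hfint : IntegrableOn f (Ioi τ) := by
    have h1 := (qCLM v).integrable_comp (Nf_integrableOn hΦ_deriv hγ hlam hUAS hτ (le_refl τ))
    exact h1.congr (ae_of_all _ fun s => qCLM_NtN v (Φ s τ))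
  have hft : f τ = v ⬝ᵥ v := by
    simp only [hf, hΦ_id τ hτ, Matrix.one_mulVec]
  have hvpos : 0 < v ⬝ᵥ v := by
    rcases lt_or_eq_of_le (Finset.sum_nonneg fun i (_ : i ∈ Finset.univ) =>
      mul_self_nonneg (v i) : (0:ℝ) ≤ v ⬝ᵥ v) with h | h
    · exact h
    · exact absurd (dotProduct_self_eq_zero.mp h.symm) hv
  have hcw : ContinuousWithinAt f (Ici τ) τ :=
    (hfc.mono (Ici_subset_Ici.mpr hτ)) τ self_mem_Ici
  have hev : f ⁻¹' Ioi ((v ⬝ᵥ v)/2) ∈ nhdsWithin τ (Ici τ) := by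
    refine hcw (Ioi_mem_nhds ?_)
    rw [hft]
    linarith
  obtain ⟨ε, hε, hball⟩ := Metric.mem_nhdsWithin_iff.mp hev
  have hsub2 : Ioc τ (τ + ε/2) ⊆ Metric.ball τ ε ∩ Ici τ := by
    intro s hs
    constructor
    · rw [Metric.mem_ball, Real.dist_eq, abs_lt]
      constructor <;> [linarith [hs.1]; linarith [hs.2]]
    · exact le_of_lt hs.1
  have hμ : (volume (Ioc τ (τ + ε/2))).toReal = ε/2 := by
    rw [Real.volume_Ioc]
    rw [ENNReal.toReal_ofReal (by linarith)]
    ring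
  have hineq : (v ⬝ᵥ v)/2 * (volume (Ioc τ (τ + ε/2))).toReal ≤ ∫ s in Ioc τ (τ + ε/2), f s := by
    rw [mul_comm]; show volume.real (Ioc τ (τ + ε/2)) • ((v ⬝ᵥ v)/2) ≤ _
    apply setIntegral_ge_of_const_le measurableSet_Ioc
    · rw [Real.volume_Ioc]; exact ENNReal.ofReal_ne_top
    · intro s hs
      exact le_of_lt (hball (hsub2 hs))
    · exact hfint.mono_set Ioc_subset_Ioi_self
  have hmono : ∫ s in Ioc τ (τ + ε/2), f s ≤ ∫ s in Ioi τ, f s := by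
    apply setIntegral_mono_set hfint (ae_of_all _ hnonneg)
    exact HasSubset.Subset.eventuallyLE Ioc_subset_Ioi_self
  have : 0 < (v ⬝ᵥ v)/2 * (ε/2) := by positivity
  rw [hμ] at hineq
  linarith

end HProps

section HCont

variable {t₀ γ lam : ℝ} {A : ℝ → Matrix (Fin n) (Fin n) ℝ}
  {Φ : ℝ → ℝ → Matrix (Fin n) (Fin n) ℝ}

lemma J_eq (hΦ_deriv : ∀ τ ∈ Ici t₀, ∀ t ∈ Ici t₀,
      HasDerivWithinAt (fun s => Φ s τ) (A t * Φ t τ) (Ici t₀) t)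
    (hγ : 0 < γ) (hlam : 0 < lam)
    (hUAS : ∀ τ ∈ Ici t₀, ∀ t ∈ Ici τ, ‖Φ t τ‖ ≤ γ * Real.exp (-lam * (t - τ)))
    {τ : ℝ} (hτ : τ ∈ Ici t₀) :
    (∫ s in Ioi τ, (Φ s t₀)ᵀ * Φ s t₀) =
      (∫ s in Ioi t₀, (Φ s t₀)ᵀ * Φ s t₀) - ∫ s in t₀..τ, (Φ s t₀)ᵀ * Φ s t₀ := by
  have ht₀ : (t₀:ℝ) ∈ Ici t₀ := le_refl t₀
  have hsplit : (∫ s in Ioi t₀, (Φ s t₀)ᵀ * Φ s t₀)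
      = (∫ s in Ioc t₀ τ, (Φ s t₀)ᵀ * Φ s t₀) + ∫ s in Ioi τ, (Φ s t₀)ᵀ * Φ s t₀ := by
    rw [← setIntegral_union (Ioc_disjoint_Ioi (le_refl τ)) measurableSet_Ioi
      ((Nf_integrableOn hΦ_deriv hγ hlam hUAS ht₀ (le_refl t₀)).mono_set Ioc_subset_Ioi_self)
      (Nf_integrableOn hΦ_deriv hγ hlam hUAS ht₀ hτ), Ioc_union_Ioi_eq_Ioi hτ]
  rw [intervalIntegral.integral_of_le hτ]
  exact eq_sub_of_add_eq' hsplit.symm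

lemma primitive_contOn (hΦ_deriv : ∀ τ ∈ Ici t₀, ∀ t ∈ Ici t₀,
      HasDerivWithinAt (fun s => Φ s τ) (A t * Φ t τ) (Ici t₀) t) :
    ContinuousOn (fun τ => ∫ s in t₀..τ, (Φ s t₀)ᵀ * Φ s t₀) (Ici t₀) := by
  have ht₀ : (t₀:ℝ) ∈ Ici t₀ := le_refl t₀
  intro τ hτ
  have hii : IntervalIntegrable (fun s => (Φ s t₀)ᵀ * Φ s t₀) volume t₀ τ := by
    apply ContinuousOn.intervalIntegrable
    apply (Nf_contOn hΦ_deriv ht₀).mono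
    rw [uIcc_of_le hτ]
    exact Icc_subset_Ici_self
  rcases eq_or_lt_of_le (mem_Ici.mp hτ) with heq | hlt
  · subst heq
    have hd := intervalIntegral.integral_hasDerivWithinAt_right (s := Ici t₀) (t := Ioi t₀) hii
      ⟨Ici t₀, mem_of_superset self_mem_nhdsWithin Ioi_subset_Ici_self,
        (Nf_contOn hΦ_deriv ht₀).aestronglyMeasurable measurableSet_Ici⟩
      (((Nf_contOn hΦ_deriv ht₀) t₀ ht₀).mono Ioi_subset_Ici_self)
    exact hd.continuousWithinAt
  · have hd := intervalIntegral.integral_hasDerivAt_right hii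
      ⟨Ici t₀, Ici_mem_nhds hlt,
        (Nf_contOn hΦ_deriv ht₀).aestronglyMeasurable measurableSet_Ici⟩
      ((Nf_contOn hΦ_deriv ht₀).continuousAt (Ici_mem_nhds hlt))
    exact hd.continuousAt.continuousWithinAt

lemma J_contOn (hΦ_deriv : ∀ τ ∈ Ici t₀, ∀ t ∈ Ici t₀,
      HasDerivWithinAt (fun s => Φ s τ) (A t * Φ t τ) (Ici t₀) t)
    (hγ : 0 < γ) (hlam : 0 < lam)
    (hUAS : ∀ τ ∈ Ici t₀, ∀ t ∈ Ici τ, ‖Φ t τ‖ ≤ γ * Real.exp (-lam * (t - τ))) :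
    ContinuousOn (fun τ => ∫ s in Ioi τ, (Φ s t₀)ᵀ * Φ s t₀) (Ici t₀) := by
  apply ContinuousOn.congr (continuousOn_const.sub (primitive_contOn hΦ_deriv))
  exact fun τ hτ => J_eq hΦ_deriv hγ hlam hUAS hτ

lemma Hmat_eq (hA : ContinuousOn A (Ici t₀))
    (hΦ_id : ∀ τ ∈ Ici t₀, Φ τ τ = 1)
    (hΦ_deriv : ∀ τ ∈ Ici t₀, ∀ t ∈ Ici t₀,
      HasDerivWithinAt (fun s => Φ s τ) (A t * Φ t τ) (Ici t₀) t)
    (hγ : 0 < γ) (hlam : 0 < lam)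
    (hUAS : ∀ τ ∈ Ici t₀, ∀ t ∈ Ici τ, ‖Φ t τ‖ ≤ γ * Real.exp (-lam * (t - τ)))
    {τ : ℝ} (hτ : τ ∈ Ici t₀) :
    Hmat Φ τ = ((Φ τ t₀)⁻¹)ᵀ * (∫ s in Ioi τ, (Φ s t₀)ᵀ * Φ s t₀) * (Φ τ t₀)⁻¹ := by
  have ht₀ : (t₀:ℝ) ∈ Ici t₀ := le_refl t₀
  have h1 : Hmat Φ τ = ∫ s in Ioi τ, conjCLM (Φ τ t₀)⁻¹ ((Φ s t₀)ᵀ * Φ s t₀) := by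
    rw [Hmat]
    apply setIntegral_congr_fun measurableSet_Ioi
    intro s hs
    show (Φ s τ)ᵀ * Φ s τ = conjCLM (Φ τ t₀)⁻¹ ((Φ s t₀)ᵀ * Φ s t₀)
    rw [phi_eq hA hΦ_id hΦ_deriv hτ (le_of_lt hs), conjCLM_apply, Matrix.transpose_mul]
    simp only [mul_assoc]
  rw [h1, ContinuousLinearMap.integral_comp_comm _
    (Nf_integrableOn hΦ_deriv hγ hlam hUAS ht₀ hτ), conjCLM_apply]

lemma Pinv_contOn (hA : ContinuousOn A (Ici t₀))
    (hΦ_id : ∀ τ ∈ Ici t₀, Φ τ τ = 1)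
    (hΦ_deriv : ∀ τ ∈ Ici t₀, ∀ t ∈ Ici t₀,
      HasDerivWithinAt (fun s => Φ s τ) (A t * Φ t τ) (Ici t₀) t) :
    ContinuousOn (fun τ => (Φ τ t₀)⁻¹) (Ici t₀) := by
  have ht₀ : (t₀:ℝ) ∈ Ici t₀ := le_refl t₀
  have hP := Phi_contOn hΦ_deriv ht₀
  have hdet : ContinuousOn (fun τ => (Φ τ t₀).det) (Ici t₀) :=
    (Continuous.matrix_det continuous_id).comp_continuousOn hP
  have hdetne : ∀ τ ∈ Ici t₀, (Φ τ t₀).det ≠ 0 := fun τ hτ =>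
    isUnit_iff_ne_zero.mp ((Matrix.isUnit_iff_isUnit_det _).mp (isUnit_P hA hΦ_id hΦ_deriv hτ))
  have hadj : ContinuousOn (fun τ => (Φ τ t₀).adjugate) (Ici t₀) :=
    (Continuous.matrix_adjugate continuous_id).comp_continuousOn hP
  apply ContinuousOn.congr ((hdet.inv₀ hdetne).smul hadj)
  intro τ hτ
  show (Φ τ t₀)⁻¹ = ((Φ τ t₀).det)⁻¹ • (Φ τ t₀).adjugate
  rw [Matrix.inv_def, Ring.inverse_eq_inv']

lemma Hfun_contOn (hA : ContinuousOn A (Ici t₀))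
    (hΦ_id : ∀ τ ∈ Ici t₀, Φ τ τ = 1)
    (hΦ_deriv : ∀ τ ∈ Ici t₀, ∀ t ∈ Ici t₀,
      HasDerivWithinAt (fun s => Φ s τ) (A t * Φ t τ) (Ici t₀) t)
    (hγ : 0 < γ) (hlam : 0 < lam)
    (hUAS : ∀ τ ∈ Ici t₀, ∀ t ∈ Ici τ, ‖Φ t τ‖ ≤ γ * Real.exp (-lam * (t - τ))) :
    ContinuousOn (fun τ => Hmat Φ τ) (Ici t₀) := by
  have hPinv := Pinv_contOn hA hΦ_id hΦ_deriv
  have hPinvT : ContinuousOn (fun τ => ((Φ τ t₀)⁻¹)ᵀ) (Ici t₀) :=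
    (trCLM n).continuous.comp_continuousOn hPinv
  have h := ((hPinvT.mul (J_contOn hΦ_deriv hγ hlam hUAS)).mul hPinv)
  apply ContinuousOn.congr h
  exact fun τ hτ => Hmat_eq hA hΦ_id hΦ_deriv hγ hlam hUAS hτ

lemma contOn_comp_lip {f : ℝ → Matrix (Fin n) (Fin n) ℝ} {g : Matrix (Fin n) (Fin n) ℝ → ℝ}
    {s : Set ℝ} (hf : ContinuousOn f s)
    (hg : ∀ a ∈ s, ∀ b ∈ s, dist (g (f a)) (g (f b)) ≤ dist (f a) (f b)) :
    ContinuousOn (fun τ => g (f τ)) s := by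
  intro τ hτ
  have h1 : Tendsto (fun τ' => dist (f τ') (f τ)) (nhdsWithin τ s) (nhds 0) := by
    have := (hf τ hτ).tendsto
    have h2 := this.dist (tendsto_const_nhds (x := f τ))
    simpa using h2
  rw [ContinuousWithinAt, tendsto_iff_dist_tendsto_zero]
  apply squeeze_zero' (Eventually.of_forall fun τ' => dist_nonneg)
    (eventually_nhdsWithin_of_forall fun τ' hτ' => hg τ' hτ' τ hτ) h1

lemma lamMax_contOn (hA : ContinuousOn A (Ici t₀))
    (hΦ_id : ∀ τ ∈ Ici t₀, Φ τ τ = 1)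
    (hΦ_deriv : ∀ τ ∈ Ici t₀, ∀ t ∈ Ici t₀,
      HasDerivWithinAt (fun s => Φ s τ) (A t * Φ t τ) (Ici t₀) t)
    (hγ : 0 < γ) (hlam : 0 < lam)
    (hUAS : ∀ τ ∈ Ici t₀, ∀ t ∈ Ici τ, ‖Φ t τ‖ ≤ γ * Real.exp (-lam * (t - τ))) :
    ContinuousOn (fun τ => lambdaMax (Hmat Φ τ)) (Ici t₀) := by
  apply contOn_comp_lip (Hfun_contOn hA hΦ_id hΦ_deriv hγ hlam hUAS)
  intro a ha b hb
  rw [Real.dist_eq, dist_eq_norm]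
  exact abs_lambdaMax_sub (Hmat_herm hΦ_deriv hγ hlam hUAS ha)
    (Hmat_herm hΦ_deriv hγ hlam hUAS hb)

lemma lamMin_contOn (hA : ContinuousOn A (Ici t₀))
    (hΦ_id : ∀ τ ∈ Ici t₀, Φ τ τ = 1)
    (hΦ_deriv : ∀ τ ∈ Ici t₀, ∀ t ∈ Ici t₀,
      HasDerivWithinAt (fun s => Φ s τ) (A t * Φ t τ) (Ici t₀) t)
    (hγ : 0 < γ) (hlam : 0 < lam)
    (hUAS : ∀ τ ∈ Ici t₀, ∀ t ∈ Ici τ, ‖Φ t τ‖ ≤ γ * Real.exp (-lam * (t - τ))) :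
    ContinuousOn (fun τ => lambdaMin (Hmat Φ τ)) (Ici t₀) := by
  apply contOn_comp_lip (Hfun_contOn hA hΦ_id hΦ_deriv hγ hlam hUAS)
  intro a ha b hb
  rw [Real.dist_eq, dist_eq_norm]
  exact abs_lambdaMin_sub (Hmat_herm hΦ_deriv hγ hlam hUAS ha)
    (Hmat_herm hΦ_deriv hγ hlam hUAS hb)

end HCont

section Prim

variable {E : Type*} [NormedAddCommGroup E] [NormedSpace ℝ E] [CompleteSpace E] {t₀ : ℝ} {f : ℝ → E}

lemma prim_intervalIntegrable (hf : ContinuousOn f (Ici t₀)) {t : ℝ} (ht : t₀ ≤ t) :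
    IntervalIntegrable f volume t₀ t := by
  apply ContinuousOn.intervalIntegrable
  apply hf.mono
  rw [uIcc_of_le ht]
  exact Icc_subset_Ici_self

lemma prim_contOn (hf : ContinuousOn f (Ici t₀)) :
    ContinuousOn (fun τ => ∫ s in t₀..τ, f s) (Ici t₀) := by
  intro τ hτ
  rcases eq_or_lt_of_le (mem_Ici.mp hτ) with heq | hlt
  · subst heq
    have hd := intervalIntegral.integral_hasDerivWithinAt_right (s := Ici t₀) (t := Ioi t₀)
      (prim_intervalIntegrable hf (le_refl t₀))
      ⟨Ici t₀, mem_of_superset self_mem_nhdsWithin Ioi_subset_Ici_self,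
        hf.aestronglyMeasurable measurableSet_Ici⟩
      ((hf t₀ (le_refl t₀)).mono Ioi_subset_Ici_self)
    exact hd.continuousWithinAt
  · have hd := intervalIntegral.integral_hasDerivAt_right (prim_intervalIntegrable hf hτ)
      ⟨Ici t₀, Ici_mem_nhds hlt, hf.aestronglyMeasurable measurableSet_Ici⟩
      (hf.continuousAt (Ici_mem_nhds hlt))
    exact hd.continuousAt.continuousWithinAt

lemma prim_hasDerivAt (hf : ContinuousOn f (Ici t₀)) {t : ℝ} (ht : t₀ < t) :
    HasDerivAt (fun τ => ∫ s in t₀..τ, f s) (f t) t :=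
  intervalIntegral.integral_hasDerivAt_right (prim_intervalIntegrable hf (le_of_lt ht))
    ⟨Ici t₀, Ici_mem_nhds ht, hf.aestronglyMeasurable measurableSet_Ici⟩
    (hf.continuousAt (Ici_mem_nhds ht))

end Prim

section Gronwall

lemma decay_upper {t₀ : ℝ} {V g lamf : ℝ → ℝ}
    (hVc : ContinuousOn V (Ici t₀))
    (hVd : ∀ u ∈ Ioi t₀, HasDerivAt V (-(g u)) u)
    (hlc : ContinuousOn (fun u => 1 / lamf u) (Ici t₀))
    (hlpos : ∀ u ∈ Ici t₀, 0 < lamf u)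
    (hub : ∀ u ∈ Ici t₀, V u ≤ lamf u * g u)
    {t : ℝ} (ht : t₀ ≤ t) :
    V t ≤ V t₀ * Real.exp (-(∫ τ in t₀..t, 1 / lamf τ)) := by
  have hFanti : AntitoneOn (fun u => V u * Real.exp (∫ τ in t₀..u, 1 / lamf τ)) (Ici t₀) := by
    apply antitoneOn_of_deriv_nonpos (convex_Ici t₀)
    · exact hVc.mul (Real.continuous_exp.comp_continuousOn (prim_contOn hlc))
    · rw [interior_Ici]
      intro u hu
      exact (((hVd u hu).mul ((prim_hasDerivAt hlc hu).exp)).differentiableAt).differentiableWithinAt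
    · rw [interior_Ici]
      intro u hu
      have humem : u ∈ Ici t₀ := mem_Ici.mpr (le_of_lt (mem_Ioi.mp hu))
      have hd : HasDerivAt (fun u => V u * Real.exp (∫ τ in t₀..u, 1 / lamf τ))
          (-(g u) * Real.exp (∫ τ in t₀..u, 1 / lamf τ) +
            V u * (Real.exp (∫ τ in t₀..u, 1 / lamf τ) * (1 / lamf u))) u :=
        (hVd u hu).mul ((prim_hasDerivAt hlc hu).exp)
      rw [hd.deriv]
      have h1 : V u * (1 / lamf u) ≤ g u := by
        rw [mul_one_div, div_le_iff₀ (hlpos u humem)]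
        calc V u ≤ lamf u * g u := hub u humem
          _ = g u * lamf u := by ring
      have h2 : (0:ℝ) < Real.exp (∫ τ in t₀..u, 1 / lamf τ) := Real.exp_pos _
      nlinarith [h2, h1]
  have hres := hFanti (self_mem_Ici (a := t₀)) (ht : t ∈ Ici t₀) ht
  simp only at hres
  rw [intervalIntegral.integral_same, Real.exp_zero, mul_one] at hres
  have h2 : (0:ℝ) < Real.exp (∫ τ in t₀..t, 1 / lamf τ) := Real.exp_pos _
  rw [Real.exp_neg]
  calc V t = V t * Real.exp (∫ τ in t₀..t, 1 / lamf τ) *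
        (Real.exp (∫ τ in t₀..t, 1 / lamf τ))⁻¹ := by field_simp
    _ ≤ V t₀ * (Real.exp (∫ τ in t₀..t, 1 / lamf τ))⁻¹ :=
        mul_le_mul_of_nonneg_right hres (by positivity)

lemma decay_lower {t₀ : ℝ} {V g lamf : ℝ → ℝ}
    (hVc : ContinuousOn V (Ici t₀))
    (hVd : ∀ u ∈ Ioi t₀, HasDerivAt V (-(g u)) u)
    (hlc : ContinuousOn (fun u => 1 / lamf u) (Ici t₀))
    (hlpos : ∀ u ∈ Ici t₀, 0 < lamf u)
    (hlb : ∀ u ∈ Ici t₀, lamf u * g u ≤ V u)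
    {t : ℝ} (ht : t₀ ≤ t) :
    V t₀ * Real.exp (-(∫ τ in t₀..t, 1 / lamf τ)) ≤ V t := by
  have hGmono : MonotoneOn (fun u => V u * Real.exp (∫ τ in t₀..u, 1 / lamf τ)) (Ici t₀) := by
    apply monotoneOn_of_deriv_nonneg (convex_Ici t₀)
    · exact hVc.mul (Real.continuous_exp.comp_continuousOn (prim_contOn hlc))
    · rw [interior_Ici]
      intro u hu
      exact (((hVd u hu).mul ((prim_hasDerivAt hlc hu).exp)).differentiableAt).differentiableWithinAt
    · rw [interior_Ici]
      intro u hu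
      have humem : u ∈ Ici t₀ := mem_Ici.mpr (le_of_lt (mem_Ioi.mp hu))
      have hd : HasDerivAt (fun u => V u * Real.exp (∫ τ in t₀..u, 1 / lamf τ))
          (-(g u) * Real.exp (∫ τ in t₀..u, 1 / lamf τ) +
            V u * (Real.exp (∫ τ in t₀..u, 1 / lamf τ) * (1 / lamf u))) u :=
        (hVd u hu).mul ((prim_hasDerivAt hlc hu).exp)
      rw [hd.deriv]
      have h1 : g u ≤ V u * (1 / lamf u) := by
        rw [mul_one_div, le_div_iff₀ (hlpos u humem)]
        calc g u * lamf u = lamf u * g u := by ring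
          _ ≤ V u := hlb u humem
      have h2 : (0:ℝ) < Real.exp (∫ τ in t₀..u, 1 / lamf τ) := Real.exp_pos _
      nlinarith [h2, h1]
  have hres := hGmono (self_mem_Ici (a := t₀)) (ht : t ∈ Ici t₀) ht
  simp only at hres
  rw [intervalIntegral.integral_same, Real.exp_zero, mul_one] at hres
  have h2 : (0:ℝ) < Real.exp (∫ τ in t₀..t, 1 / lamf τ) := Real.exp_pos _
  rw [Real.exp_neg]
  calc V t₀ * (Real.exp (∫ τ in t₀..t, 1 / lamf τ))⁻¹
      ≤ V t * Real.exp (∫ τ in t₀..t, 1 / lamf τ) *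
        (Real.exp (∫ τ in t₀..t, 1 / lamf τ))⁻¹ := mul_le_mul_of_nonneg_right hres (by positivity)
    _ = V t := by field_simp

lemma sqrt_exp_half (z : ℝ) : Real.sqrt (Real.exp z) = Real.exp (z/2) := by
  rw [show Real.exp z = Real.exp (z/2) ^ 2 by rw [sq, ← Real.exp_add]; ring_nf]
  exact Real.sqrt_sq (le_of_lt (Real.exp_pos _))

end Gronwall

end Stmt10Aux

open Stmt10Aux

/-- for a uniformly asymptotically stable system and any solution `x`, for all
`t ≥ t₀`:
`‖x(t₀)‖_{H(t₀)} e^{−(1/2)∫_{t₀}^t dτ/λ_min[H(τ)]} ≤ ‖x(t)‖_{H(t)}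
  ≤ ‖x(t₀)‖_{H(t₀)} e^{−(1/2)∫_{t₀}^t dτ/λ_max[H(τ)]}`. -/
theorem stmt10 {n : ℕ} (t₀ : ℝ) (A : ℝ → Matrix (Fin n) (Fin n) ℝ)
    (hA : ContinuousOn A (Ici t₀))
    (Φ : ℝ → ℝ → Matrix (Fin n) (Fin n) ℝ)
    (hΦ_id : ∀ τ ∈ Ici t₀, Φ τ τ = 1)
    (hΦ_deriv : ∀ τ ∈ Ici t₀, ∀ t ∈ Ici t₀,
      HasDerivWithinAt (fun s => Φ s τ) (A t * Φ t τ) (Ici t₀) t)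
    (γ lam : ℝ) (hγ : 0 < γ) (hlam : 0 < lam)
    (hUAS : ∀ τ ∈ Ici t₀, ∀ t ∈ Ici τ, ‖Φ t τ‖ ≤ γ * Real.exp (-lam * (t - τ)))
    (x : ℝ → Fin n → ℝ)
    (hx : ∀ t ∈ Ici t₀, HasDerivWithinAt x (A t *ᵥ x t) (Ici t₀) t) :
    ∀ t ∈ Ici t₀,
      wNorm (Hmat Φ t₀) (x t₀) *
          Real.exp (-(1 / 2) * ∫ τ in t₀..t, 1 / lambdaMin (Hmat Φ τ))
        ≤ wNorm (Hmat Φ t) (x t) ∧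
      wNorm (Hmat Φ t) (x t)
        ≤ wNorm (Hmat Φ t₀) (x t₀) *
            Real.exp (-(1 / 2) * ∫ τ in t₀..t, 1 / lambdaMax (Hmat Φ τ)) := by
  intro t htt
  rcases Nat.eq_zero_or_pos n with hn0 | hnpos
  · subst hn0
    constructor
    · simp [wNorm, dotProduct]
    · simp [wNorm, dotProduct]
  haveI : Nonempty (Fin n) := ⟨⟨0, hnpos⟩⟩
  have ht₀ : (t₀:ℝ) ∈ Ici t₀ := le_refl t₀
  have hdot : Continuous fun w : Fin n → ℝ => w ⬝ᵥ w := by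
    apply continuous_finset_sum
    exact fun i _ => (continuous_apply i).mul (continuous_apply i)
  set g : ℝ → ℝ := fun s => x s ⬝ᵥ x s with hg_def
  have hxc : ContinuousOn x (Ici t₀) := continuousOn_of_hasDeriv hx
  have hgc : ContinuousOn g (Ici t₀) := hdot.comp_continuousOn hxc
  have hgnn : ∀ s, 0 ≤ g s := fun s => Finset.sum_nonneg fun i _ => mul_self_nonneg _
  set V : ℝ → ℝ := fun u => ∫ s in Ioi u, g s with hV_def
  have hgeq : ∀ u ∈ Ici t₀, EqOn (fun s => (Φ s u *ᵥ x u) ⬝ᵥ (Φ s u *ᵥ x u)) g (Ioi u) := by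
    intro u hu s hs
    show (Φ s u *ᵥ x u) ⬝ᵥ (Φ s u *ᵥ x u) = x s ⬝ᵥ x s
    rw [rep hA hΦ_id hΦ_deriv hx hu (le_of_lt hs)]
  have hVq : ∀ u ∈ Ici t₀, x u ⬝ᵥ (Hmat Φ u *ᵥ x u) = V u := by
    intro u hu
    rw [quad_Hmat hΦ_deriv hγ hlam hUAS hu (x u)]
    exact setIntegral_congr_fun measurableSet_Ioi (hgeq u hu)
  have hgint : ∀ u ∈ Ici t₀, IntegrableOn g (Ioi u) := by
    intro u hu
    have h1 := (qCLM (x u)).integrable_comp (Nf_integrableOn hΦ_deriv hγ hlam hUAS hu (le_refl u))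
    have h2 : IntegrableOn (fun s => (Φ s u *ᵥ x u) ⬝ᵥ (Φ s u *ᵥ x u)) (Ioi u) :=
      h1.congr (ae_of_all _ fun s => qCLM_NtN (x u) (Φ s u))
    exact h2.congr_fun (hgeq u hu) measurableSet_Ioi
  have hVsplit : ∀ u ∈ Ici t₀, V u = V t₀ - ∫ s in t₀..u, g s := by
    intro u hu
    have hsp : V t₀ = (∫ s in Ioc t₀ u, g s) + V u := by
      rw [hV_def]
      rw [← setIntegral_union (Ioc_disjoint_Ioi (le_refl u)) measurableSet_Ioi
        ((hgint t₀ ht₀).mono_set Ioc_subset_Ioi_self) (hgint u hu), Ioc_union_Ioi_eq_Ioi hu]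
    rw [intervalIntegral.integral_of_le hu]
    exact eq_sub_of_add_eq' hsp.symm
  have hVc : ContinuousOn V (Ici t₀) :=
    ContinuousOn.congr (continuousOn_const.sub (prim_contOn hgc)) hVsplit
  have hVd : ∀ u ∈ Ioi t₀, HasDerivAt V (-(g u)) u := by
    intro u hu
    have hd := (prim_hasDerivAt hgc hu).const_sub (V t₀)
    apply hd.congr_of_eventuallyEq
    filter_upwards [Ici_mem_nhds hu] with r hr
    exact hVsplit r hr
  have hPD : ∀ u ∈ Ici t₀, (Hmat Φ u).PosDef :=
    fun u hu => Hmat_posdef hΦ_id hΦ_deriv hγ hlam hUAS hu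
  have hminpos : ∀ u ∈ Ici t₀, 0 < lambdaMin (Hmat Φ u) := fun u hu => lambdaMin_pos (hPD u hu)
  have hmaxpos : ∀ u ∈ Ici t₀, 0 < lambdaMax (Hmat Φ u) := fun u hu => lambdaMax_pos (hPD u hu)
  have hVub : ∀ u ∈ Ici t₀, V u ≤ lambdaMax (Hmat Φ u) * g u := by
    intro u hu
    rw [← hVq u hu]
    have h := quad_le_lambdaMax (hPD u hu).1 (x u)
    exact h
  have hVlb : ∀ u ∈ Ici t₀, lambdaMin (Hmat Φ u) * g u ≤ V u := by
    intro u hu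
    rw [← hVq u hu]
    exact lambdaMin_le_quad (hPD u hu).1 (x u)
  have hV0 : ∀ u, 0 ≤ V u := fun u =>
    setIntegral_nonneg measurableSet_Ioi fun s _ => hgnn s
  have hinvmax : ContinuousOn (fun τ => 1 / lambdaMax (Hmat Φ τ)) (Ici t₀) :=
    continuousOn_const.div (lamMax_contOn hA hΦ_id hΦ_deriv hγ hlam hUAS)
      (fun u hu => ne_of_gt (hmaxpos u hu))
  have hinvmin : ContinuousOn (fun τ => 1 / lambdaMin (Hmat Φ τ)) (Ici t₀) :=
    continuousOn_const.div (lamMin_contOn hA hΦ_id hΦ_deriv hγ hlam hUAS)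
      (fun u hu => ne_of_gt (hminpos u hu))
  have hVup : V t ≤ V t₀ * Real.exp (-(∫ τ in t₀..t, 1 / lambdaMax (Hmat Φ τ))) :=
    decay_upper hVc hVd hinvmax hmaxpos hVub htt
  have hVlo : V t₀ * Real.exp (-(∫ τ in t₀..t, 1 / lambdaMin (Hmat Φ τ))) ≤ V t :=
    decay_lower hVc hVd hinvmin hminpos hVlb htt
  have hw : ∀ u ∈ Ici t₀, wNorm (Hmat Φ u) (x u) = Real.sqrt (V u) := by
    intro u hu
    rw [wNorm, hVq u hu]
  constructor
  · rw [hw t₀ ht₀, hw t htt]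
    set I : ℝ := ∫ τ in t₀..t, 1 / lambdaMin (Hmat Φ τ) with hI
    calc Real.sqrt (V t₀) * Real.exp (-(1/2) * I)
        = Real.sqrt (V t₀) * Real.sqrt (Real.exp (-I)) := by
          rw [sqrt_exp_half]
          congr 1
          ring
      _ = Real.sqrt (V t₀ * Real.exp (-I)) := (Real.sqrt_mul (hV0 t₀) _).symm
      _ ≤ Real.sqrt (V t) := Real.sqrt_le_sqrt hVlo
  · rw [hw t₀ ht₀, hw t htt]
    set I : ℝ := ∫ τ in t₀..t, 1 / lambdaMax (Hmat Φ τ) with hI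
    calc Real.sqrt (V t)
        ≤ Real.sqrt (V t₀ * Real.exp (-I)) := Real.sqrt_le_sqrt hVup
      _ = Real.sqrt (V t₀) * Real.sqrt (Real.exp (-I)) := Real.sqrt_mul (hV0 t₀) _
      _ = Real.sqrt (V t₀) * Real.exp (-(1/2) * I) := by
          rw [sqrt_exp_half]
          congr 1
          ring
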